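/- Let ν, e, c₊, c₋ be complex numbers with e ≠ 0, sin(πν) ≠ 0, and c₊ − c₋ = e^{−2}. Define E = i·e·( i(c₊+c₋)/2 + e^{−2}·cot(πν)/2 ), and define the 2×2 matrix G_χ = I₂ + 4 sin²(πν) · [[−E·e, E²],[−e², e·E]]. Then (I₂ + c₊·σ⁺) · G_χ · (I₂ − c₋·σ⁺) = [[exp(−2iπν), 0],[exp(2iπν)·e²·(exp(−2iπν)−1)², exp(2iπν)]]; in particular the conjugated jump matrix is lower triangular with the indicated diagonal and lower-left entry. -/

import Mathlib

set_option maxHeartbeats 1000000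


/-- The algebraic core of the first transformation of the RHP: conjugating the jump
matrix `G_χ` by `I₂ + c₊ σ⁺` on the left and `I₂ - c₋ σ⁺` on the right yields a lower
triangular matrix. -/
theorem statement2 (ν e cp cm : ℂ) (he : e ≠ 0)
    (hsin : Complex.sin ((Real.pi : ℂ) * ν) ≠ 0)
    (hjump : cp - cm = e ^ (-2 : ℤ))
    (E : ℂ)
    (hE : E = Complex.I * e * (Complex.I * (cp + cm) / 2 +
      e ^ (-2 : ℤ) *
        (Complex.cos ((Real.pi : ℂ) * ν) / Complex.sin ((Real.pi : ℂ) * ν)) / 2)) :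
    ((1 : Matrix (Fin 2) (Fin 2) ℂ) + cp • !![0, 1; 0, 0]) *
      ((1 : Matrix (Fin 2) (Fin 2) ℂ) +
        (4 * Complex.sin ((Real.pi : ℂ) * ν) ^ 2) •
          !![-(E * e), E ^ 2; -(e ^ 2), e * E]) *
      ((1 : Matrix (Fin 2) (Fin 2) ℂ) - cm • !![0, 1; 0, 0])
    = !![Complex.exp (-(2 * (Real.pi : ℂ) * Complex.I * ν)), 0;
         Complex.exp (2 * (Real.pi : ℂ) * Complex.I * ν) * e ^ 2 *
           (Complex.exp (-(2 * (Real.pi : ℂ) * Complex.I * ν)) - 1) ^ 2,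
         Complex.exp (2 * (Real.pi : ℂ) * Complex.I * ν)] := by
  set z := Complex.exp ((Real.pi : ℂ) * ν * Complex.I) with hzdef
  have hz : z ≠ 0 := Complex.exp_ne_zero _
  have hzinv : Complex.exp (-((Real.pi : ℂ) * ν * Complex.I)) = z⁻¹ := by
    rw [hzdef, ← Complex.exp_neg]
  have hs : Complex.sin ((Real.pi : ℂ) * ν) = (z⁻¹ - z) * Complex.I / 2 := by
    rw [Complex.sin, show -((Real.pi:ℂ)*ν)*Complex.I = -((Real.pi:ℂ)*ν*Complex.I) by ring, hzinv, hzdef]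
  have hc : Complex.cos ((Real.pi : ℂ) * ν) = (z + z⁻¹) / 2 := by
    rw [Complex.cos, show -((Real.pi:ℂ)*ν)*Complex.I = -((Real.pi:ℂ)*ν*Complex.I) by ring, hzinv, hzdef]
  have hp : Complex.exp (2 * (Real.pi : ℂ) * Complex.I * ν) = z ^ 2 := by
    rw [hzdef, sq, ← Complex.exp_add]; ring_nf
  have hm : Complex.exp (-(2 * (Real.pi : ℂ) * Complex.I * ν)) = (z ^ 2)⁻¹ := by
    rw [Complex.exp_neg, hp]
  have hzz : z⁻¹ - z ≠ 0 := by
    intro h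
    apply hsin
    rw [hs, h]; ring
  have h1z : (1 : ℂ) - z ^ 2 ≠ 0 := by
    intro h
    apply hzz
    have : z * (z⁻¹ - z) = 1 - z ^ 2 := by field_simp
    have h0 : z * (z⁻¹ - z) = 0 := by rw [this, h]
    rcases mul_eq_zero.mp h0 with h' | h'
    · exact absurd h' hz
    · exact h'
  have h2 : e ^ (-2 : ℤ) = (e ^ 2)⁻¹ := by
    rw [zpow_neg]; norm_cast
  have hcp : cp = cm + (e ^ 2)⁻¹ := by
    rw [h2] at hjump; linear_combination hjump
  have hs' : Complex.sin ((Real.pi : ℂ) * ν) = (1 - z ^ 2) * Complex.I / (2 * z) := by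
    rw [hs]; field_simp
  have hc' : Complex.cos ((Real.pi : ℂ) * ν) = (z ^ 2 + 1) / (2 * z) := by
    rw [hc]; field_simp
  have hcot : Complex.cos ((Real.pi : ℂ) * ν) / Complex.sin ((Real.pi : ℂ) * ν)
      = -Complex.I * (z ^ 2 + 1) / (1 - z ^ 2) := by
    rw [hc', hs']
    rw [div_div_div_comm, div_self (mul_ne_zero two_ne_zero hz), div_one,
      div_eq_div_iff (mul_ne_zero h1z Complex.I_ne_zero) h1z]
    linear_combination ((z ^ 2 + 1) * (1 - z ^ 2)) * Complex.I_sq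
  have hE'' : E = -(e * (cp + cm)) / 2 + (z ^ 2 + 1) / (2 * e * (1 - z ^ 2)) := by
    rw [hE, hcot, h2]
    field_simp
    linear_combination (e ^ 2 * (cp + cm) * (1 - z ^ 2) - (z ^ 2 + 1)) * Complex.I_sq
  have h4s : 4 * Complex.sin ((Real.pi : ℂ) * ν) ^ 2 = -((1 - z ^ 2) ^ 2) / z ^ 2 := by
    rw [hs']
    rw [div_pow, mul_pow, mul_pow, Complex.I_sq]
    field_simp
    ring
  have hD : (z ^ 2 * (e ^ 2 * 2 * (2 * e * (1 - z ^ 2))) : ℂ) ≠ 0 := by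
    apply mul_ne_zero (pow_ne_zero _ hz)
    apply mul_ne_zero (by simpa using mul_ne_zero (pow_ne_zero 2 he) (two_ne_zero))
    exact mul_ne_zero (mul_ne_zero two_ne_zero he) h1z
  have hD2 : (z ^ 2 * (e ^ 2 * 2 * (2 * e * (1 - z ^ 2))) ^ 2 : ℂ) ≠ 0 := by
    apply mul_ne_zero (pow_ne_zero _ hz)
    apply pow_ne_zero
    apply mul_ne_zero (by simpa using mul_ne_zero (pow_ne_zero 2 he) (two_ne_zero))
    exact mul_ne_zero (mul_ne_zero two_ne_zero he) h1z
  ext i j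
  fin_cases i <;> fin_cases j
  all_goals simp only [Matrix.mul_apply, Fin.sum_univ_two, Matrix.one_apply, Matrix.add_apply,
      Matrix.sub_apply, Matrix.smul_apply, Matrix.cons_val', Matrix.cons_val_zero,
      Matrix.cons_val_one, Matrix.head_cons, Matrix.head_fin_const, Matrix.empty_val',
      Matrix.cons_val_fin_one, Matrix.of_apply, smul_eq_mul, Fin.isValue, Fin.zero_eta,
      Fin.mk_one]
  all_goals simp only [h4s, hE'', hcp, hp, hm, h2, if_true, reduceIte,
    (by decide : ¬ (1 : Fin 2) = 0), (by decide : ¬ (0 : Fin 2) = 1)]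
  all_goals field_simp [he, hz, h1z]
  all_goals try field_simp [hD, hD2, pow_ne_zero 2 hD]
  all_goals ring
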